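/- Let n be odd. Define the 2n × 2n array M_n in block form [[B_n, C_n],[D_n, B_n]], where B_n(i,j) ≡ i-j (mod n) with values in {0,...,n-1}, C_n(i,j) ≡ i+j-2 (mod n) with values in {n,...,2n-1}, and D_n(i,j) ≡ i+j-3 (mod n) with values in {n,...,2n-1}. Then M_n is a 2n × 2n Latin square on {0,1,...,2n-1}. -/
import Mathlib

private lemma modeq_lt_eq {n x y : ℕ} (hx : x < n) (hy : y < n) (h : x % n = y % n) : x = y := by
  rwa [Nat.mod_eq_of_lt hx, Nat.mod_eq_of_lt hy] at h

/-- unique `c < n` with `(a + c) % n = v` -/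
private lemma L2 (n : ℕ) (hn : 0 < n) (a v : ℕ) (hv : v < n) :
    ∃! c, c < n ∧ (a + c) % n = v := by
  have ha : a % n < n := Nat.mod_lt _ hn
  refine ⟨(v + n - a % n) % n, ⟨Nat.mod_lt _ hn, ?_⟩, ?_⟩
  · have h1 : a + (v + n - a % n) % n ≡ a % n + (v + n - a % n) [MOD n] :=
      Nat.ModEq.add (Nat.mod_modEq a n).symm (Nat.mod_modEq _ n)
    have h2 : a % n + (v + n - a % n) = v + n := by omega
    rw [h2] at h1
    have h3 : (a + (v + n - a % n) % n) % n = (v + n) % n := h1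
    rw [h3, Nat.add_mod_right]; exact Nat.mod_eq_of_lt hv
  · rintro c ⟨hc, hceq⟩
    have h1 : a + c ≡ a + (v + n - a % n) % n [MOD n] := by
      rw [Nat.ModEq, hceq]
      symm
      have h1 : a + (v + n - a % n) % n ≡ a % n + (v + n - a % n) [MOD n] :=
        Nat.ModEq.add (Nat.mod_modEq a n).symm (Nat.mod_modEq _ n)
      have h2 : a % n + (v + n - a % n) = v + n := by omega
      rw [h2] at h1
      have h3 : (a + (v + n - a % n) % n) % n = (v + n) % n := h1
      rw [h3, Nat.add_mod_right]; exact Nat.mod_eq_of_lt hv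
    have := h1.add_left_cancel' a
    exact modeq_lt_eq hc (Nat.mod_lt _ hn) this

private lemma sub_iff {n a c v : ℕ} (_hn : 0 < n) (hc : c < n) (hv : v < n) :
    (a + n - c) % n = v ↔ (v + c) % n = (a + n) % n := by
  have hcn : c ≤ a + n := by omega
  constructor
  · intro h
    have h1 : (a + n - c) ≡ v [MOD n] := by rw [Nat.ModEq, h, Nat.mod_eq_of_lt hv]
    have h2 := h1.symm.add_right c
    rwa [Nat.sub_add_cancel hcn] at h2
  · intro h
    have h2 : v + c ≡ (a + n - c) + c [MOD n] := by rw [Nat.sub_add_cancel hcn]; exact h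
    have h3 := h2.add_right_cancel' c
    rw [Nat.ModEq, Nat.mod_eq_of_lt hv] at h3
    exact h3.symm

/-- unique `c < n` with `(a + n - c) % n = v` -/
private lemma L1 (n : ℕ) (hn : 0 < n) (a v : ℕ) (hv : v < n) :
    ∃! c, c < n ∧ (a + n - c) % n = v := by
  have h := L2 n hn v ((a + n) % n) (Nat.mod_lt _ hn)
  exact (existsUnique_congr fun c =>
    and_congr_right fun hc => sub_iff hn hc hv).mpr h

private lemma shiftUnique {n : ℕ} {Q : ℕ → Prop} (h : ∃! c, c < n ∧ Q (c + n)) :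
    ∃! c, (n ≤ c ∧ c < 2 * n) ∧ Q c := by
  obtain ⟨c0, ⟨hc0, hQ⟩, hu⟩ := h
  refine ⟨c0 + n, ⟨⟨by omega, by omega⟩, hQ⟩, ?_⟩
  rintro c ⟨⟨h1, h2⟩, hQc⟩
  have := hu (c - n) ⟨by omega, by rw [Nat.sub_add_cancel h1]; exact hQc⟩
  omega

/-- The `2n × 2n` array `M_n = [[B_n, C_n],[D_n, B_n]]` (0-based global row `r` and
column `c`): `B_n(i,j) ≡ i - j (mod n)` with values in `{0,…,n-1}`,
`C_n(i,j) ≡ i + j - 2 (mod n)` with values in `{n,…,2n-1}`, and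
`D_n(i,j) ≡ i + j - 3 (mod n)` with values in `{n,…,2n-1}`, where within each
block the indices `i,j` are 1-based. -/
def Mn (n r c : ℕ) : ℕ :=
  if r < n then
    (if c < n then (r + n - c) % n else n + (r + c) % n)
  else
    (if c < n then n + (r + c + n - 1) % n else (r + n - c) % n)


/-- For odd `n`, `M_n` is a `2n × 2n` Latin square on `{0,1,…,2n-1}`: each row and
each column contains every value of `{0,…,2n-1}` exactly once. -/
theorem Mn_latin (n : ℕ) (hn : Odd n) :
    (∀ r < 2 * n, ∀ v < 2 * n, ∃! c, c < 2 * n ∧ Mn n r c = v) ∧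
    (∀ c < 2 * n, ∀ v < 2 * n, ∃! r, r < 2 * n ∧ Mn n r c = v) := by
  have hp : 0 < n := hn.pos
  constructor
  · intro r hr v hv
    by_cases hr' : r < n
    · by_cases hv' : v < n
      · -- top-left B block
        have h := L1 n hp r v hv'
        refine (existsUnique_congr fun c => ?_).mpr h
        simp only [Mn, if_pos hr']
        constructor
        · rintro ⟨hc, heq⟩
          by_cases hcn : c < n
          · rw [if_pos hcn] at heq; exact ⟨hcn, heq⟩
          · rw [if_neg hcn] at heq; omega
        · rintro ⟨hcn, heq⟩; exact ⟨by omega, by rw [if_pos hcn]; exact heq⟩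
      · -- top-right C block
        have h := L2 n hp r (v - n) (by omega)
        have h2 : ∃! c, c < n ∧ n + (r + (c + n)) % n = v := by
          refine (existsUnique_congr fun c => and_congr_right fun hc => ?_).mpr h
          rw [show r + (c + n) = (r + c) + n from by ring, Nat.add_mod_right]
          omega
        have h3 := shiftUnique (Q := fun c => n + (r + c) % n = v) h2
        refine (existsUnique_congr fun c => ?_).mpr h3
        simp only [Mn, if_pos hr']
        constructor
        · rintro ⟨hc, heq⟩
          by_cases hcn : c < n
          · rw [if_pos hcn] at heq
            have := Nat.mod_lt (r + n - c) hp; omega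
          · rw [if_neg hcn] at heq; exact ⟨⟨by omega, hc⟩, heq⟩
        · rintro ⟨⟨h1, h2⟩, heq⟩
          exact ⟨h2, by rw [if_neg (by omega : ¬ c < n)]; exact heq⟩
    · by_cases hv' : v < n
      · -- bottom-right B block
        have h := L1 n hp (r - n) v hv'
        have h2 : ∃! c, c < n ∧ (r + n - (c + n)) % n = v := by
          refine (existsUnique_congr fun c => and_congr_right fun hc => ?_).mpr h
          rw [show r + n - (c + n) = (r - n) + n - c from by omega]
        have h3 := shiftUnique (Q := fun c => (r + n - c) % n = v) h2
        refine (existsUnique_congr fun c => ?_).mpr h3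
        simp only [Mn, if_neg hr']
        constructor
        · rintro ⟨hc, heq⟩
          by_cases hcn : c < n
          · rw [if_pos hcn] at heq; omega
          · rw [if_neg hcn] at heq; exact ⟨⟨by omega, hc⟩, heq⟩
        · rintro ⟨⟨h1, h2⟩, heq⟩
          exact ⟨h2, by rw [if_neg (by omega : ¬ c < n)]; exact heq⟩
      · -- bottom-left D block
        have h := L2 n hp (r + n - 1) (v - n) (by omega)
        refine (existsUnique_congr fun c => ?_).mpr h
        simp only [Mn, if_neg hr']
        constructor
        · rintro ⟨hc, heq⟩
          by_cases hcn : c < n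
          · rw [if_pos hcn] at heq
            refine ⟨hcn, ?_⟩
            rw [show r + n - 1 + c = r + c + n - 1 from by omega]; omega
          · rw [if_neg hcn] at heq
            have := Nat.mod_lt (r + n - c) hp; omega
        · rintro ⟨hcn, heq⟩
          refine ⟨by omega, ?_⟩
          rw [if_pos hcn, show r + c + n - 1 = r + n - 1 + c from by omega]
          omega
  · intro c hc v hv
    by_cases hc' : c < n
    · by_cases hv' : v < n
      · -- top-left B block
        have h := L2 n hp (n - c) v hv'
        refine (existsUnique_congr fun r => ?_).mpr h
        constructor
        · rintro ⟨hr, heq⟩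
          by_cases hrn : r < n
          · simp only [Mn, if_pos hrn, if_pos hc'] at heq
            exact ⟨hrn, by rw [show n - c + r = r + n - c from by omega]; exact heq⟩
          · simp only [Mn, if_neg hrn, if_pos hc'] at heq
            have := Nat.mod_lt (r + c + n - 1) hp; omega
        · rintro ⟨hrn, heq⟩
          refine ⟨by omega, ?_⟩
          simp only [Mn, if_pos hrn, if_pos hc']
          rw [show r + n - c = n - c + r from by omega]; exact heq
      · -- bottom-left D block
        have h := L2 n hp (c + n - 1) (v - n) (by omega)
        have h2 : ∃! r, r < n ∧ n + (r + n + c + n - 1) % n = v := by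
          refine (existsUnique_congr fun r => and_congr_right fun hr => ?_).mpr h
          rw [show r + n + c + n - 1 = (c + n - 1 + r) + n from by omega, Nat.add_mod_right]
          omega
        have h3 := shiftUnique (Q := fun r => n + (r + c + n - 1) % n = v) h2
        refine (existsUnique_congr fun r => ?_).mpr h3
        constructor
        · rintro ⟨hr, heq⟩
          by_cases hrn : r < n
          · simp only [Mn, if_pos hrn, if_pos hc'] at heq
            have := Nat.mod_lt (r + n - c) hp; omega
          · simp only [Mn, if_neg hrn, if_pos hc'] at heq
            exact ⟨⟨by omega, hr⟩, heq⟩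
        · rintro ⟨⟨h1, h2⟩, heq⟩
          refine ⟨h2, ?_⟩
          simp only [Mn, if_neg (by omega : ¬ r < n), if_pos hc']
          exact heq
    · by_cases hv' : v < n
      · -- bottom-right B block
        have h := L2 n hp (2 * n - c) v hv'
        have h2 : ∃! r, r < n ∧ (r + n + n - c) % n = v := by
          refine (existsUnique_congr fun r => and_congr_right fun hr => ?_).mpr h
          rw [show r + n + n - c = 2 * n - c + r from by omega]
        have h3 := shiftUnique (Q := fun r => (r + n - c) % n = v) h2
        refine (existsUnique_congr fun r => ?_).mpr h3
        constructor
        · rintro ⟨hr, heq⟩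
          by_cases hrn : r < n
          · simp only [Mn, if_pos hrn, if_neg hc'] at heq; omega
          · simp only [Mn, if_neg hrn, if_neg hc'] at heq
            exact ⟨⟨by omega, hr⟩, heq⟩
        · rintro ⟨⟨h1, h2⟩, heq⟩
          refine ⟨h2, ?_⟩
          simp only [Mn, if_neg (by omega : ¬ r < n), if_neg hc']
          exact heq
      · -- top-right C block
        have h := L2 n hp c (v - n) (by omega)
        refine (existsUnique_congr fun r => ?_).mpr h
        constructor
        · rintro ⟨hr, heq⟩
          by_cases hrn : r < n
          · simp only [Mn, if_pos hrn, if_neg hc'] at heq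
            exact ⟨hrn, by rw [show c + r = r + c from by omega]; omega⟩
          · simp only [Mn, if_neg hrn, if_neg hc'] at heq
            have := Nat.mod_lt (r + n - c) hp; omega
        · rintro ⟨hrn, heq⟩
          refine ⟨by omega, ?_⟩
          simp only [Mn, if_pos hrn, if_neg hc']
          rw [show r + c = c + r from by omega]; omega
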